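/- Posterior consistency for i.i.d. sampling from a finite observation space with a continuous, identifiable likelihood (the Bayesian consistency engine behind Theorems 1 and 2). Let Θ be a compact metric space, X a nonempty finite type, and L : Θ → X → ℝ a function such that L θ x ≥ 0 for all θ ∈ Θ and x ∈ X, Σ_{x ∈ X} L θ x = 1 for all θ, the map θ ↦ L θ x is continuous for each x, and L is injective (L θ = L θ' implies θ = θ'). Fix θ₀ ∈ Θ, let μ₀ be the probability measure on X with μ₀({x}) = L θ₀ x, and let Π be a Borel probability measure on Θ whose topological support is all of Θ. For data x₁, …, x_n ∈ X define the posterior of a Borel set A ⊆ Θ by Π_n(A | x₁, …, x_n) = (∫_A ∏_{i=1}^n L θ x_i dΠ(θ)) / (∫_Θ ∏_{i=1}^n L θ x_i dΠ(θ)), whenever the denominator is strictly positive. Then for μ₀^{⊗ℕ}-almost every sequence (x_i)_{i∈ℕ} in X^ℕ, for every ε > 0, the posterior mass Π_n({θ ∈ Θ : dist(θ, θ₀) < ε} | x₁, …, x_n) is well-defined for all sufficiently large n and converges to 1 as n → ∞. -/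

import Mathlib

open MeasureTheory ProbabilityTheory Filter
open scoped ENNReal Topology

section AuxLemmas

variable {X : Type*} [Fintype X] [DecidableEq X]

/-- Counting identity: sum over samples equals weighted sum over values. -/
lemma sum_comp_count (ω : ℕ → X) (n : ℕ) (g : X → ℝ) :
    ∑ i ∈ Finset.range n, g (ω i)
      = ∑ x : X, ((((Finset.range n).filter fun i => ω i = x).card : ℝ)) * g x := by
  classical
  rw [← Finset.sum_fiberwise_of_maps_to (t := Finset.univ)
      (fun i _ => Finset.mem_univ (ω i)) (fun i => g (ω i))]
  refine Finset.sum_congr rfl fun x _ => ?_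
  rw [Finset.sum_congr rfl (fun i hi => by rw [(Finset.mem_filter.mp hi).2]),
    Finset.sum_const, nsmul_eq_mul]

/-- Strict Gibbs inequality. -/
lemma gibbs_strict {Θ : Type*} (L : Θ → X → ℝ)
    (hL_nonneg : ∀ θ x, 0 ≤ L θ x)
    (hL_sum : ∀ θ, ∑ x, L θ x = 1)
    (hL_inj : Function.Injective L)
    (θ₀ θ : Θ) (hθ : θ ≠ θ₀)
    (hpos : ∀ x, 0 < L θ₀ x → 0 < L θ x) :
    ∑ x, L θ₀ x * Real.log (L θ x) < ∑ x, L θ₀ x * Real.log (L θ₀ x) := by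
  classical
  set p := L θ₀ with hp
  set q := L θ with hq
  set s : Finset X := Finset.univ.filter fun x => 0 < p x with hs
  have hp0 : ∀ x, x ∉ s → p x = 0 := by
    intro x hx
    simp only [hs, Finset.mem_filter, Finset.mem_univ, true_and, not_lt] at hx
    exact le_antisymm hx (hL_nonneg θ₀ x)
  have hsum_ps : ∑ x ∈ s, p x = 1 := by
    rw [← hL_sum θ₀]
    exact Finset.sum_subset (Finset.subset_univ s) (fun x _ hx => hp0 x hx)
  have hsum_qs : ∑ x ∈ s, q x ≤ 1 := by
    rw [← hL_sum θ]
    exact Finset.sum_le_sum_of_subset_of_nonneg (Finset.subset_univ s)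
      (fun x _ _ => hL_nonneg θ x)
  -- pointwise comparison
  set f : X → ℝ := fun x => p x * (Real.log (q x) - Real.log (p x)) with hf
  set g : X → ℝ := fun x => if 0 < p x then q x - p x else 0 with hg
  have hfg : ∀ x, f x ≤ g x := by
    intro x
    by_cases hx : 0 < p x
    · have hqx : 0 < q x := hpos x hx
      have hlog : Real.log (q x) - Real.log (p x) ≤ q x / p x - 1 := by
        rw [← Real.log_div (ne_of_gt hqx) (ne_of_gt hx)]
        exact Real.log_le_sub_one_of_pos (div_pos hqx hx)
      have : f x ≤ p x * (q x / p x - 1) :=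
        mul_le_mul_of_nonneg_left hlog hx.le
      simp only [hg, if_pos hx]
      calc f x ≤ p x * (q x / p x - 1) := this
        _ = q x - p x := by field_simp
    · have hx0 : p x = 0 := le_antisymm (not_lt.mp hx) (hL_nonneg θ₀ x)
      simp [hf, hg, hx0, hx]
  have hexists : ∃ x, 0 < p x ∧ q x ≠ p x := by
    by_contra h
    push_neg at h
    apply hθ
    apply hL_inj
    rw [← hq, ← hp]
    funext x
    by_cases hx : 0 < p x
    · exact h x hx
    · have hx0 : p x = 0 := le_antisymm (not_lt.mp hx) (hL_nonneg θ₀ x)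
      have hqsum : ∑ y ∈ s, q y = 1 := by
        rw [← hsum_ps]
        exact Finset.sum_congr rfl fun y hy =>
          h y ((Finset.mem_filter.mp hy).2)
      have huniv : ∑ y, q y = 1 := hL_sum θ
      have hrest : ∑ y ∈ Finset.univ \ s, q y = 0 := by
        have := Finset.sum_sdiff_eq_sub (Finset.subset_univ s) (f := q)
        rw [huniv, hqsum] at this
        linarith
      have hq0 : q x = 0 := by
        have hmem : x ∈ Finset.univ \ s :=
          Finset.mem_sdiff.mpr ⟨Finset.mem_univ x, by simp [hs, hx]⟩
        have := (Finset.sum_eq_zero_iff_of_nonneg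
          (fun y _ => hL_nonneg θ y)).mp hrest x hmem
        exact this
      rw [hq0, hx0]
  obtain ⟨x₀, hx₀, hqp⟩ := hexists
  have hstrict : f x₀ < g x₀ := by
    have hqx : 0 < q x₀ := hpos x₀ hx₀
    have hne1 : q x₀ / p x₀ ≠ 1 := by
      intro h1
      apply hqp
      field_simp at h1
      exact h1
    have hlog : Real.log (q x₀ / p x₀) < q x₀ / p x₀ - 1 :=
      Real.log_lt_sub_one_of_pos (div_pos hqx hx₀) hne1
    have : f x₀ < p x₀ * (q x₀ / p x₀ - 1) := by
      rw [hf]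
      simp only
      rw [← Real.log_div (ne_of_gt hqx) (ne_of_gt hx₀)]
      exact (mul_lt_mul_iff_right₀ hx₀).mpr hlog
    simp only [hg, if_pos hx₀]
    calc f x₀ < p x₀ * (q x₀ / p x₀ - 1) := this
      _ = q x₀ - p x₀ := by field_simp
  have hsumlt : ∑ x, f x < ∑ x, g x :=
    Finset.sum_lt_sum (fun x _ => hfg x) ⟨x₀, Finset.mem_univ x₀, hstrict⟩
  have hsumg : ∑ x, g x ≤ 0 := by
    have : ∑ x, g x = ∑ x ∈ s, (q x - p x) := by
      rw [← Finset.sum_subset (Finset.subset_univ s)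
        (fun x _ hx => ?_)]
      · exact Finset.sum_congr rfl fun x hx => by
          simp [hg, (Finset.mem_filter.mp hx).2]
      · simp only [hg]
        rw [if_neg]
        simp only [hs, Finset.mem_filter, Finset.mem_univ, true_and] at hx
        exact hx
    rw [this, Finset.sum_sub_distrib, hsum_ps]
    linarith
  have hkey : ∑ x, f x < 0 := lt_of_lt_of_le hsumlt hsumg
  have hexpand : ∑ x, f x
      = ∑ x, p x * Real.log (q x) - ∑ x, p x * Real.log (p x) := by
    rw [← Finset.sum_sub_distrib]
    exact Finset.sum_congr rfl fun x _ => by ring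
  linarith [hexpand ▸ hkey]

end AuxLemmas

section Det

variable {Θ : Type*} [MetricSpace Θ] [CompactSpace Θ] [MeasurableSpace Θ] [BorelSpace Θ]
variable {X : Type*} [Fintype X] [Nonempty X] [DecidableEq X]
variable (L : Θ → X → ℝ)

set_option maxHeartbeats 2000000 in
/-- Deterministic part of posterior consistency. -/
lemma det_consistency
    (hL_nonneg : ∀ θ x, 0 ≤ L θ x)
    (hL_sum : ∀ θ, ∑ x, L θ x = 1)
    (hL_cont : ∀ x, Continuous fun θ => L θ x)
    (hL_inj : Function.Injective L)
    (θ₀ : Θ)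
    (prior : Measure Θ) [IsProbabilityMeasure prior]
    (hprior_supp : ∀ U : Set Θ, IsOpen U → U.Nonempty → 0 < prior U)
    (ω : ℕ → X)
    (hω1 : ∀ i, 0 < L θ₀ (ω i))
    (hω2 : ∀ x : X, Tendsto (fun n : ℕ =>
        ((((Finset.range n).filter fun i => ω i = x).card : ℝ)) / n) atTop (𝓝 (L θ₀ x)))
    {ε : ℝ} (hε : 0 < ε) :
    (∀ᶠ n in atTop,
        0 < ∫⁻ θ, ∏ i : Fin n, ENNReal.ofReal (L θ (ω (i : ℕ))) ∂prior ∧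
          ∫⁻ θ, ∏ i : Fin n, ENNReal.ofReal (L θ (ω (i : ℕ))) ∂prior < ⊤) ∧
      Tendsto
        (fun n : ℕ =>
          (∫⁻ θ in {θ : Θ | dist θ θ₀ < ε},
              ∏ i : Fin n, ENNReal.ofReal (L θ (ω (i : ℕ))) ∂prior) /
            ∫⁻ θ, ∏ i : Fin n, ENNReal.ofReal (L θ (ω (i : ℕ))) ∂prior)
        atTop (𝓝 1) := by
  classical
  -- notation
  set p : X → ℝ := L θ₀ with hpdef
  set cnt : ℕ → X → ℕ := fun n x => ((Finset.range n).filter fun i => ω i = x).card with hcnt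
  set Λ : ℕ → Θ → ℝ := fun n θ => ∏ i ∈ Finset.range n, L θ (ω i) with hΛ
  set s₀ : ℝ := ∑ x, p x * Real.log (p x) with hs₀
  set K : ℝ → Θ → ℝ := fun t θ => ∑ x, p x * Real.log (max (L θ x) t) with hK
  have hple1 : ∀ θ x, L θ x ≤ 1 := fun θ x => by
    have := Finset.single_le_sum (fun y _ => hL_nonneg θ y) (Finset.mem_univ x)
    rwa [hL_sum θ] at this
  have hΛ_nonneg : ∀ n θ, 0 ≤ Λ n θ := fun n θ =>
    Finset.prod_nonneg fun i _ => hL_nonneg θ (ω i)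
  have hΛ_le1 : ∀ n θ, Λ n θ ≤ 1 := fun n θ =>
    Finset.prod_le_one (fun i _ => hL_nonneg θ (ω i)) (fun i _ => hple1 θ (ω i))
  have hp_nonneg : ∀ x, 0 ≤ p x := fun x => hL_nonneg θ₀ x
  have hp_le1 : ∀ x, p x ≤ 1 := fun x => hple1 θ₀ x
  have hs₀_nonpos : s₀ ≤ 0 := by
    refine Finset.sum_nonpos fun x _ => ?_
    rcases eq_or_lt_of_le (hp_nonneg x) with h | h
    · rw [← h]; simp
    · exact mul_nonpos_iff.mpr (Or.inl ⟨le_of_lt h,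
        Real.log_nonpos (le_of_lt h) (hp_le1 x)⟩)
  have hK_cont : ∀ t : ℝ, 0 < t → Continuous (K t) := by
    intro t ht
    refine continuous_finset_sum _ fun x _ => ?_
    exact continuous_const.mul (((hL_cont x).max continuous_const).log
      (fun θ => ne_of_gt (lt_of_lt_of_le ht (le_max_right _ _))))
  -- existence of a positive coordinate
  have hSne : ∃ x, 0 < p x := by
    by_contra h
    push_neg at h
    have : ∑ x, p x = 0 := Finset.sum_eq_zero fun x _ =>
      le_antisymm (h x) (hL_nonneg θ₀ x)
    rw [hL_sum θ₀] at this
    norm_num at this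
  -- Gibbs with truncation
  have hGibbsT : ∀ θ : Θ, θ ≠ θ₀ → ∃ t : ℝ, 0 < t ∧ t ≤ 1 ∧ K t θ < s₀ := by
    intro θ hθ
    by_cases hcase : ∀ x, 0 < p x → 0 < L θ x
    · -- case B
      refine ⟨Finset.univ.inf' Finset.univ_nonempty
        (fun x => if 0 < p x then L θ x else 1), ?_, ?_, ?_⟩
      · rw [Finset.lt_inf'_iff]
        intro x _
        by_cases hx : 0 < p x
        · rw [if_pos hx]; exact hcase x hx
        · rw [if_neg hx]; exact one_pos
      · obtain ⟨x₀, hx₀⟩ := hSne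
        refine le_trans (Finset.inf'_le _ (Finset.mem_univ x₀)) ?_
        rw [if_pos hx₀]; exact hple1 θ x₀
      · have heq : K (Finset.univ.inf' Finset.univ_nonempty
            (fun x => if 0 < p x then L θ x else 1)) θ
            = ∑ x, p x * Real.log (L θ x) := by
          refine Finset.sum_congr rfl fun x _ => ?_
          by_cases hx : 0 < p x
          · have hle : Finset.univ.inf' Finset.univ_nonempty
                (fun x => if 0 < p x then L θ x else 1) ≤ L θ x := by
              refine le_trans (Finset.inf'_le _ (Finset.mem_univ x)) ?_
              rw [if_pos hx]
            rw [max_eq_left hle]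
          · have hx0 : p x = 0 := le_antisymm (not_lt.mp hx) (hL_nonneg θ₀ x)
            rw [hx0, zero_mul, zero_mul]
        rw [heq]
        exact gibbs_strict L hL_nonneg hL_sum hL_inj θ₀ θ hθ hcase
    · -- case A : some x₀ with p x₀ > 0 but L θ x₀ = 0
      push_neg at hcase
      obtain ⟨x₀, hx₀p, hx₀q⟩ := hcase
      have hq0 : L θ x₀ = 0 := le_antisymm hx₀q (hL_nonneg θ x₀)
      refine ⟨Real.exp ((s₀ - 1) / p x₀), Real.exp_pos _, ?_, ?_⟩
      · rw [Real.exp_le_one_iff]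
        exact div_nonpos_of_nonpos_of_nonneg (by linarith) hx₀p.le
      · set t := Real.exp ((s₀ - 1) / p x₀) with htdef
        have ht1 : t ≤ 1 := by
          rw [htdef, Real.exp_le_one_iff]
          exact div_nonpos_of_nonpos_of_nonneg (by linarith) hx₀p.le
        have hbound : K t θ ≤ ∑ x, (if x = x₀ then s₀ - 1 else 0) := by
          refine Finset.sum_le_sum fun x _ => ?_
          by_cases hx : x = x₀
          · subst hx
            rw [if_pos rfl, hq0, max_eq_right (Real.exp_pos _).le, Real.log_exp]
            rw [mul_div_cancel₀ _ (ne_of_gt hx₀p)]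
          · rw [if_neg hx]
            have hmax0 : 0 ≤ max (L θ x) t :=
              le_trans (Real.exp_pos _).le (le_max_right _ _)
            have hmax1 : max (L θ x) t ≤ 1 := max_le (hple1 θ x) ht1
            exact mul_nonpos_iff.mpr (Or.inl ⟨hp_nonneg x,
              Real.log_nonpos hmax0 hmax1⟩)
        rw [Finset.sum_ite_eq' Finset.univ x₀ (fun _ => s₀ - 1)] at hbound
        simp only [Finset.mem_univ, if_pos] at hbound
        linarith
  -- compactness: numerator exponent bound
  set C : Set Θ := {θ | ε ≤ dist θ θ₀} with hC
  have hCcompact : IsCompact C := by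
    have : IsClosed C :=
      isClosed_le continuous_const ((continuous_id.dist continuous_const))
    exact this.isCompact
  have hCne_θ₀ : ∀ θ ∈ C, θ ≠ θ₀ := by
    intro θ hθ h
    rw [h] at hθ
    simp only [hC, Set.mem_setOf_eq, dist_self] at hθ
    linarith
  obtain ⟨βmax, hβmax_lt, T, hT, hcover⟩ :
      ∃ β : ℝ, β < s₀ ∧ ∃ T : Finset ℝ, (∀ t ∈ T, 0 < t ∧ t ≤ 1) ∧
        ∀ θ ∈ C, ∃ t ∈ T, K t θ ≤ β := by
    have hchoice : ∀ θ : Θ, θ ∈ C → ∃ t : ℝ, 0 < t ∧ t ≤ 1 ∧ K t θ < s₀ :=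
      fun θ hθ => hGibbsT θ (hCne_θ₀ θ hθ)
    choose! t ht0 ht1 htK using hchoice
    set U : Θ → Set Θ := fun j => {θ' | K (t j) θ' < (K (t j) j + s₀) / 2} with hU
    have hUopen : ∀ j ∈ C, IsOpen (U j) :=
      fun j hj => isOpen_lt (hK_cont (t j) (ht0 j hj)) continuous_const
    have hsub : C ⊆ ⋃ j ∈ C, U j := by
      intro θ hθ
      refine Set.mem_biUnion hθ ?_
      simp only [hU, Set.mem_setOf_eq]
      linarith [htK θ hθ]
    obtain ⟨D, hDC, hDfin, hDcov⟩ :=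
      hCcompact.elim_finite_subcover_image hUopen hsub
    refine ⟨(insert (s₀ - 1) (hDfin.toFinset.image
        (fun j => (K (t j) j + s₀) / 2))).max' (Finset.insert_nonempty _ _),
      ?_, hDfin.toFinset.image t, ?_, ?_⟩
    · rw [Finset.max'_lt_iff]
      intro y hy
      rcases Finset.mem_insert.mp hy with h | h
      · rw [h]; linarith
      · obtain ⟨j, hj, rfl⟩ := Finset.mem_image.mp h
        have hjC : j ∈ C := hDC (hDfin.mem_toFinset.mp hj)
        linarith [htK j hjC]
    · intro u hu
      obtain ⟨j, hj, rfl⟩ := Finset.mem_image.mp hu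
      have hjC : j ∈ C := hDC (hDfin.mem_toFinset.mp hj)
      exact ⟨ht0 j hjC, ht1 j hjC⟩
    · intro θ hθ
      obtain ⟨j, hjD, hjU⟩ := Set.mem_iUnion₂.mp (hDcov hθ)
      refine ⟨t j, Finset.mem_image_of_mem t (hDfin.mem_toFinset.mpr hjD), ?_⟩
      have hjC : j ∈ C := hDC hjD
      refine le_trans (le_of_lt hjU) ?_
      exact Finset.le_max' _ ((K (t j) j + s₀) / 2) (Finset.mem_insert_of_mem
        (Finset.mem_image_of_mem (fun j => (K (t j) j + s₀) / 2)
          (hDfin.mem_toFinset.mpr hjD)))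
  -- numerator bound parameters
  set M : ℝ := 1 + ∑ t ∈ T, |Real.log t| with hM
  have hMsum_nonneg : 0 ≤ ∑ t ∈ T, |Real.log t| :=
    Finset.sum_nonneg fun t _ => abs_nonneg _
  have hM1 : 1 ≤ M := by rw [hM]; linarith
  have hMpos : 0 < M := lt_of_lt_of_le one_pos hM1
  have hMbound : ∀ t ∈ T, -Real.log t ≤ M := by
    intro t ht
    have h1 : -Real.log t ≤ |Real.log t| := neg_le_abs _
    have h2 : |Real.log t| ≤ ∑ u ∈ T, |Real.log u| :=
      Finset.single_le_sum (f := fun u => |Real.log u|)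
        (fun u _ => abs_nonneg _) ht
    rw [hM]; linarith
  set cardX : ℝ := (Fintype.card X : ℝ) with hcardX
  have hcard0 : 0 < cardX := by
    rw [hcardX]
    exact_mod_cast Fintype.card_pos
  set b₁ : ℝ := (βmax + s₀) / 2 with hb₁
  have hb₁lt : b₁ < s₀ := by rw [hb₁]; linarith
  have hb₁gt : βmax < b₁ := by rw [hb₁]; linarith
  set δ₁ : ℝ := (s₀ - βmax) / (2 * cardX * M) with hδ₁
  have hδ₁pos : 0 < δ₁ := by
    rw [hδ₁]
    apply div_pos (by linarith) (by positivity)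
  have hδ₁eq : cardX * (δ₁ * M) = (s₀ - βmax) / 2 := by
    rw [hδ₁]; field_simp
  -- numerator bound
  have hNum : ∀ n : ℕ, (∀ x, |(cnt n x : ℝ) / n - p x| ≤ δ₁) →
      ∀ θ ∈ C, Λ n θ ≤ Real.exp (n * b₁) := by
    intro n hn θ hθ
    obtain ⟨t, htT, htK⟩ := hcover θ hθ
    obtain ⟨ht0, ht1⟩ := hT t htT
    have hstep1 : Λ n θ ≤ ∏ i ∈ Finset.range n, max (L θ (ω i)) t := by
      rw [hΛ]
      exact Finset.prod_le_prod (fun i _ => hL_nonneg θ (ω i))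
        (fun i _ => le_max_left _ _)
    have hstep2 : ∏ i ∈ Finset.range n, max (L θ (ω i)) t
        = Real.exp (∑ x : X, (cnt n x : ℝ) * Real.log (max (L θ x) t)) := by
      simp only [hcnt]
      rw [← sum_comp_count ω n (fun x => Real.log (max (L θ x) t))]
      rw [Real.exp_sum]
      exact Finset.prod_congr rfl fun i _ =>
        (Real.exp_log (lt_of_lt_of_le ht0 (le_max_right _ _))).symm
    have hkey : ∑ x : X, (cnt n x : ℝ) * Real.log (max (L θ x) t) ≤ n * b₁ := by
      rcases Nat.eq_zero_or_pos n with rfl | hn0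
      · simp [hcnt]
      · have hnR : (0:ℝ) < n := by exact_mod_cast hn0
        have hper : ∀ x : X, (cnt n x : ℝ) * Real.log (max (L θ x) t)
            ≤ n * (p x * Real.log (max (L θ x) t) + δ₁ * M) := by
          intro x
          set g : ℝ := Real.log (max (L θ x) t) with hg
          have hg_le : g ≤ 0 := Real.log_nonpos
            (le_trans ht0.le (le_max_right _ _)) (max_le (hple1 θ x) ht1)
          have hg_ge : Real.log t ≤ g := Real.log_le_log ht0 (le_max_right _ _)
          have hlogtM : -Real.log t ≤ M := hMbound t htT
          have habs : |g| ≤ M := abs_le.mpr ⟨by linarith, by linarith⟩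
          have hdiff : ((cnt n x : ℝ)/n - p x) * g ≤ δ₁ * M := by
            refine le_trans (le_abs_self _) ?_
            rw [abs_mul]
            exact mul_le_mul (hn x) habs (abs_nonneg _) (le_of_lt hδ₁pos)
          have hne : (n:ℝ) ≠ 0 := ne_of_gt hnR
          have hcnt_eq : (n:ℝ) * (((cnt n x : ℝ)/n) * g) = (cnt n x : ℝ) * g := by
            field_simp
            try ring
          calc (cnt n x : ℝ) * g = n * (((cnt n x : ℝ)/n) * g) := hcnt_eq.symm
            _ = n * ((((cnt n x : ℝ)/n - p x) * g) + p x * g) := by ring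
            _ ≤ n * (δ₁ * M + p x * g) := by
                apply mul_le_mul_of_nonneg_left ?_ hnR.le
                linarith
            _ = n * (p x * g + δ₁ * M) := by ring
        have hsum := Finset.sum_le_sum (fun x (_ : x ∈ Finset.univ) => hper x)
        have heq2 : ∑ x : X, (n : ℝ) * (p x * Real.log (max (L θ x) t) + δ₁ * M)
            = n * (K t θ + cardX * (δ₁ * M)) := by
          rw [← Finset.mul_sum, Finset.sum_add_distrib, Finset.sum_const,
            Finset.card_univ, nsmul_eq_mul, hK, hcardX]
        calc ∑ x : X, (cnt n x : ℝ) * Real.log (max (L θ x) t)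
            ≤ ∑ x : X, (n : ℝ) * (p x * Real.log (max (L θ x) t) + δ₁ * M) := hsum
          _ = n * (K t θ + cardX * (δ₁ * M)) := heq2
          _ ≤ n * (βmax + (s₀ - βmax)/2) := by
              apply mul_le_mul_of_nonneg_left ?_ hnR.le
              rw [hδ₁eq]; linarith
          _ = n * b₁ := by rw [hb₁]; ring
    calc Λ n θ ≤ ∏ i ∈ Finset.range n, max (L θ (ω i)) t := hstep1
      _ = Real.exp (∑ x : X, (cnt n x : ℝ) * Real.log (max (L θ x) t)) := hstep2
      _ ≤ Real.exp (n * b₁) := Real.exp_le_exp.mpr hkey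
  -- denominator bound parameters
  set a₁ : ℝ := (b₁ + s₀) / 2 with ha₁
  have ha₁gt : b₁ < a₁ := by rw [ha₁]; linarith
  have ha₁lt : a₁ < s₀ := by rw [ha₁]; linarith
  set a₂ : ℝ := (a₁ + s₀) / 2 with ha₂
  have ha₂gt : a₁ < a₂ := by rw [ha₂]; linarith
  have ha₂lt : a₂ < s₀ := by rw [ha₂]; linarith
  set cmin : ℝ := Finset.univ.inf' Finset.univ_nonempty
      (fun x => if 0 < p x then p x else 1) with hcmindef
  have hcmin0 : 0 < cmin := by
    rw [hcmindef, Finset.lt_inf'_iff]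
    intro x _
    by_cases hx : 0 < p x
    · rw [if_pos hx]; exact hx
    · rw [if_neg hx]; exact one_pos
  have hcminle : ∀ x, 0 < p x → cmin ≤ p x := by
    intro x hx
    refine le_trans (Finset.inf'_le _ (Finset.mem_univ x)) ?_
    rw [if_pos hx]
  have hcmin1 : cmin ≤ 1 := by
    obtain ⟨x₀, hx₀⟩ := hSne
    refine le_trans (Finset.inf'_le _ (Finset.mem_univ x₀)) ?_
    rw [if_pos hx₀]; exact hp_le1 x₀
  set c : ℝ := cmin / 2 with hcdef
  have hc0 : 0 < c := by rw [hcdef]; linarith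
  have hc1 : c < 1 := by rw [hcdef]; linarith
  have hcp : ∀ x, 0 < p x → c < p x := by
    intro x hx
    have := hcminle x hx
    rw [hcdef]; linarith
  set M₂ : ℝ := -Real.log c with hM₂
  have hM₂pos : 0 < M₂ := by
    rw [hM₂, neg_pos]
    exact Real.log_neg hc0 hc1
  set δ₂ : ℝ := (a₂ - a₁) / (cardX * M₂) with hδ₂
  have hδ₂pos : 0 < δ₂ := by
    rw [hδ₂]
    apply div_pos (by linarith) (by positivity)
  have hδ₂eq : cardX * (δ₂ * M₂) = a₂ - a₁ := by
    rw [hδ₂]; field_simp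
  -- neighborhood V
  set V : Set Θ := {θ | a₂ < K c θ} ∩
      ⋂ x ∈ Finset.univ.filter (fun x => 0 < p x), {θ | c < L θ x} with hVdef
  have hVopen : IsOpen V := by
    apply IsOpen.inter
    · exact isOpen_lt continuous_const (hK_cont c hc0)
    · exact isOpen_biInter_finset fun x _ =>
        isOpen_lt continuous_const (hL_cont x)
  have hKcθ₀ : K c θ₀ = s₀ := by
    rw [hK, hs₀]
    refine Finset.sum_congr rfl fun x _ => ?_
    by_cases hx : 0 < p x
    · rw [max_eq_left (le_of_lt (hcp x hx))]
    · have hx0 : p x = 0 := le_antisymm (not_lt.mp hx) (hp_nonneg x)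
      rw [hx0, zero_mul, zero_mul]
  have hθ₀V : θ₀ ∈ V := by
    constructor
    · simp only [Set.mem_setOf_eq]
      rw [hKcθ₀]; exact ha₂lt
    · refine Set.mem_iInter₂.mpr fun x hx => ?_
      simp only [Finset.mem_filter] at hx
      exact hcp x hx.2
  -- denominator bound
  have hDenB : ∀ n : ℕ, (∀ x, |(cnt n x : ℝ) / n - p x| ≤ δ₂) →
      ∀ θ ∈ V, Real.exp (n * a₁) ≤ Λ n θ := by
    intro n hn θ hθV
    obtain ⟨hθ1, hθ2⟩ := hθV
    have hLc : ∀ x, 0 < p x → c < L θ x := by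
      intro x hx
      exact Set.mem_iInter₂.mp hθ2 x
        (Finset.mem_filter.mpr ⟨Finset.mem_univ x, hx⟩)
    have hLpos : ∀ i : ℕ, 0 < L θ (ω i) :=
      fun i => lt_trans hc0 (hLc (ω i) (hω1 i))
    have hstep2 : Λ n θ
        = Real.exp (∑ x : X, (cnt n x : ℝ) * Real.log (L θ x)) := by
      rw [hΛ]
      simp only [hcnt]
      rw [← sum_comp_count ω n (fun x => Real.log (L θ x))]
      rw [Real.exp_sum]
      exact Finset.prod_congr rfl fun i _ => (Real.exp_log (hLpos i)).symm
    have hkey : (n : ℝ) * a₁ ≤ ∑ x : X, (cnt n x : ℝ) * Real.log (L θ x) := by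
      rcases Nat.eq_zero_or_pos n with rfl | hn0
      · simp [hcnt]
      · have hnR : (0:ℝ) < n := by exact_mod_cast hn0
        have hper : ∀ x : X,
            (n : ℝ) * (p x * Real.log (max (L θ x) c) - δ₂ * M₂)
              ≤ (cnt n x : ℝ) * Real.log (L θ x) := by
          intro x
          by_cases hx : 0 < p x
          · have hcx : c < L θ x := hLc x hx
            have hmax : max (L θ x) c = L θ x := max_eq_left hcx.le
            set g : ℝ := Real.log (L θ x) with hg
            have hg_le : g ≤ 0 := Real.log_nonpos (hL_nonneg θ x) (hple1 θ x)
            have hg_ge : Real.log c ≤ g := Real.log_le_log hc0 hcx.le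
            have habs : |g| ≤ M₂ := abs_le.mpr ⟨by rw [hM₂]; linarith,
              by linarith⟩
            have hdiff : (p x - (cnt n x : ℝ)/n) * g ≤ δ₂ * M₂ := by
              refine le_trans (le_abs_self _) ?_
              rw [abs_mul]
              refine mul_le_mul ?_ habs (abs_nonneg _) (le_of_lt hδ₂pos)
              rw [abs_sub_comm]
              exact hn x
            have hne : (n:ℝ) ≠ 0 := ne_of_gt hnR
            have hcnt_eq : (n:ℝ) * (((cnt n x : ℝ)/n) * g) = (cnt n x : ℝ) * g := by
              field_simp
              try ring
            rw [hmax]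
            calc (n:ℝ) * (p x * g - δ₂ * M₂)
                ≤ n * (p x * g - (p x - (cnt n x : ℝ)/n) * g) := by
                  apply mul_le_mul_of_nonneg_left ?_ hnR.le
                  linarith
              _ = n * (((cnt n x : ℝ)/n) * g) := by ring
              _ = (cnt n x : ℝ) * g := hcnt_eq
          · have hx0 : p x = 0 := le_antisymm (not_lt.mp hx) (hp_nonneg x)
            have hcnt0 : cnt n x = 0 := by
              simp only [hcnt]
              rw [Finset.card_eq_zero, Finset.filter_eq_empty_iff]
              intro i _ hix
              rw [← hix] at hx0
              exact absurd hx0 (ne_of_gt (hω1 i))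
            rw [hcnt0, hx0]
            simp only [Nat.cast_zero, zero_mul]
            have : (0:ℝ) ≤ (n:ℝ) * (δ₂ * M₂) := by positivity
            nlinarith [this]
        have hsum := Finset.sum_le_sum (fun x (_ : x ∈ Finset.univ) => hper x)
        have heq2 : ∑ x : X, (n : ℝ) * (p x * Real.log (max (L θ x) c) - δ₂ * M₂)
            = n * (K c θ - cardX * (δ₂ * M₂)) := by
          rw [← Finset.mul_sum, Finset.sum_sub_distrib, Finset.sum_const,
            Finset.card_univ, nsmul_eq_mul, hK, hcardX]
        have hKcθ : a₂ < K c θ := hθ1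
        calc (n:ℝ) * a₁ = n * (a₂ - (a₂ - a₁)) := by ring
          _ ≤ n * (K c θ - cardX * (δ₂ * M₂)) := by
              apply mul_le_mul_of_nonneg_left ?_ hnR.le
              rw [hδ₂eq]; linarith
          _ = ∑ x : X, (n : ℝ) * (p x * Real.log (max (L θ x) c) - δ₂ * M₂) :=
              heq2.symm
          _ ≤ ∑ x : X, (cnt n x : ℝ) * Real.log (L θ x) := hsum
    rw [hstep2]
    exact Real.exp_le_exp.mpr hkey
  -- convert products in goal
  have hprod : ∀ (n : ℕ) (θ : Θ),
      (∏ i : Fin n, ENNReal.ofReal (L θ (ω (i : ℕ)))) = ENNReal.ofReal (Λ n θ) := by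
    intro n θ
    rw [hΛ]
    calc (∏ i : Fin n, ENNReal.ofReal (L θ (ω (i : ℕ))))
        = ∏ i ∈ Finset.range n, ENNReal.ofReal (L θ (ω i)) :=
          Fin.prod_univ_eq_prod_range (fun i => ENNReal.ofReal (L θ (ω i))) n
      _ = ENNReal.ofReal (∏ i ∈ Finset.range n, L θ (ω i)) :=
          (ENNReal.ofReal_prod_of_nonneg (fun i _ => hL_nonneg θ (ω i))).symm
  simp only [hprod]
  -- integrals
  set Den : ℕ → ℝ≥0∞ := fun n => ∫⁻ θ, ENNReal.ofReal (Λ n θ) ∂prior with hDen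
  have hmeasΛ : ∀ n, Measurable fun θ => ENNReal.ofReal (Λ n θ) := by
    intro n
    apply Measurable.ennreal_ofReal
    rw [hΛ]
    exact (continuous_finset_prod _ fun i _ => hL_cont (ω i)).measurable
  have hDen_le_one : ∀ n, Den n ≤ 1 := by
    intro n
    rw [hDen]
    calc ∫⁻ θ, ENNReal.ofReal (Λ n θ) ∂prior
        ≤ ∫⁻ _, 1 ∂prior := lintegral_mono fun θ => by
          rw [← ENNReal.ofReal_one]
          exact ENNReal.ofReal_le_ofReal (hΛ_le1 n θ)
      _ = 1 := by rw [lintegral_one, measure_univ]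
  have hpriorV : 0 < prior V := hprior_supp V hVopen ⟨θ₀, hθ₀V⟩
  have hBmeas : MeasurableSet {θ : Θ | dist θ θ₀ < ε} :=
    (isOpen_lt (continuous_id.dist continuous_const) continuous_const).measurableSet
  have hCB : C = {θ : Θ | dist θ θ₀ < ε}ᶜ := by
    ext θ
    simp [hC, not_lt]
  -- eventual frequency control
  have hEv : ∀ δ : ℝ, 0 < δ → ∀ᶠ n in atTop, ∀ x, |(cnt n x : ℝ)/n - p x| ≤ δ := by
    intro δ hδ
    rw [eventually_all]
    intro x
    have h1 : ∀ᶠ y in 𝓝 (p x), |y - p x| ≤ δ := by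
      filter_upwards [Metric.ball_mem_nhds (p x) hδ] with y hy
      rw [Metric.mem_ball, Real.dist_eq] at hy
      exact hy.le
    exact (hω2 x).eventually h1
  have hEvNum : ∀ᶠ n : ℕ in atTop, ∀ θ ∈ C, Λ n θ ≤ Real.exp (n * b₁) :=
    (hEv δ₁ hδ₁pos).mono fun n hn => hNum n hn
  have hEvDen : ∀ᶠ n : ℕ in atTop, ∀ θ ∈ V, Real.exp (n * a₁) ≤ Λ n θ :=
    (hEv δ₂ hδ₂pos).mono fun n hn => hDenB n hn
  have hDenLB : ∀ᶠ n : ℕ in atTop,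
      ENNReal.ofReal (Real.exp (n * a₁)) * prior V ≤ Den n := by
    filter_upwards [hEvDen] with n hn
    calc ENNReal.ofReal (Real.exp (n * a₁)) * prior V
        = ∫⁻ _ in V, ENNReal.ofReal (Real.exp (n * a₁)) ∂prior :=
          (setLIntegral_const V _).symm
      _ ≤ ∫⁻ θ in V, ENNReal.ofReal (Λ n θ) ∂prior :=
          setLIntegral_mono (hmeasΛ n) fun θ hθ =>
            ENNReal.ofReal_le_ofReal (hn θ hθ)
      _ ≤ Den n := setLIntegral_le_lintegral _ _
  have hNumUB : ∀ᶠ n : ℕ in atTop,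
      (∫⁻ θ in C, ENNReal.ofReal (Λ n θ) ∂prior)
        ≤ ENNReal.ofReal (Real.exp (n * b₁)) := by
    filter_upwards [hEvNum] with n hn
    calc ∫⁻ θ in C, ENNReal.ofReal (Λ n θ) ∂prior
        ≤ ∫⁻ _ in C, ENNReal.ofReal (Real.exp (n * b₁)) ∂prior :=
          setLIntegral_mono measurable_const fun θ hθ =>
            ENNReal.ofReal_le_ofReal (hn θ hθ)
      _ = ENNReal.ofReal (Real.exp (n * b₁)) * prior C := setLIntegral_const _ _
      _ ≤ ENNReal.ofReal (Real.exp (n * b₁)) * 1 :=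
          mul_le_mul_right prob_le_one _
      _ = ENNReal.ofReal (Real.exp (n * b₁)) := mul_one _
  set rn : ℕ → ℝ≥0∞ := fun n =>
    (∫⁻ θ in C, ENNReal.ofReal (Λ n θ) ∂prior) / Den n with hrn
  have hrbound : ∀ᶠ n : ℕ in atTop,
      rn n ≤ (prior V)⁻¹ * ENNReal.ofReal (Real.exp (n * (b₁ - a₁))) := by
    filter_upwards [hNumUB, hDenLB] with n h1 h2
    have hstep : rn n ≤ ENNReal.ofReal (Real.exp (n * b₁)) /
        (ENNReal.ofReal (Real.exp (n * a₁)) * prior V) := by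
      rw [hrn]
      exact ENNReal.div_le_div h1 h2
    have hsplit : ENNReal.ofReal (Real.exp (n * b₁))
        = ENNReal.ofReal (Real.exp (n * (b₁ - a₁))) *
          ENNReal.ofReal (Real.exp (n * a₁)) := by
      rw [← ENNReal.ofReal_mul (Real.exp_nonneg _), ← Real.exp_add]
      ring_nf
    have hcomm : ENNReal.ofReal (Real.exp (n * a₁)) * prior V
        = prior V * ENNReal.ofReal (Real.exp (n * a₁)) := mul_comm _ _
    rw [hsplit, hcomm] at hstep
    rw [ENNReal.mul_div_mul_right _ _ (by positivity) ENNReal.ofReal_ne_top] at hstep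
    rwa [ENNReal.div_eq_inv_mul] at hstep
  have htend0 : Tendsto (fun n : ℕ =>
      (prior V)⁻¹ * ENNReal.ofReal (Real.exp (n * (b₁ - a₁)))) atTop (𝓝 0) := by
    have h1 : Tendsto (fun n : ℕ => (n : ℝ) * (b₁ - a₁)) atTop atBot :=
      Tendsto.atTop_mul_const_of_neg (by linarith) tendsto_natCast_atTop_atTop
    have h2 : Tendsto (fun n : ℕ => Real.exp ((n : ℝ) * (b₁ - a₁))) atTop (𝓝 0) :=
      Real.tendsto_exp_atBot.comp h1
    have h3 : Tendsto (fun n : ℕ =>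
        ENNReal.ofReal (Real.exp ((n : ℝ) * (b₁ - a₁)))) atTop (𝓝 0) := by
      have := (ENNReal.continuous_ofReal.tendsto 0).comp h2
      simpa [Function.comp_def] using this
    have h4 := ENNReal.Tendsto.const_mul h3
      (Or.inr (ENNReal.inv_ne_top.mpr (ne_of_gt hpriorV)))
    simpa using h4
  have hr0 : Tendsto rn atTop (𝓝 0) :=
    tendsto_of_tendsto_of_tendsto_of_le_of_le' tendsto_const_nhds htend0
      (Eventually.of_forall fun n => zero_le) hrbound
  have hDenpos : ∀ᶠ n : ℕ in atTop, 0 < Den n := by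
    filter_upwards [hDenLB] with n hn
    exact lt_of_lt_of_le
      (ENNReal.mul_pos (ne_of_gt (ENNReal.ofReal_pos.mpr (Real.exp_pos _)))
        (ne_of_gt hpriorV)) hn
  constructor
  · filter_upwards [hDenpos] with n hn
    exact ⟨hn, lt_of_le_of_lt (hDen_le_one n) ENNReal.one_lt_top⟩
  · have hev_eq : ∀ᶠ n : ℕ in atTop,
        (∫⁻ θ in {θ : Θ | dist θ θ₀ < ε}, ENNReal.ofReal (Λ n θ) ∂prior) / Den n
          = 1 - rn n := by
      filter_upwards [hDenpos] with n hdn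
      have hsplit : (∫⁻ θ in {θ : Θ | dist θ θ₀ < ε},
            ENNReal.ofReal (Λ n θ) ∂prior)
          + ∫⁻ θ in C, ENNReal.ofReal (Λ n θ) ∂prior = Den n := by
        rw [hCB, hDen]
        exact lintegral_add_compl _ hBmeas
      have hDenne : Den n ≠ 0 := ne_of_gt hdn
      have hDentop : Den n ≠ ⊤ :=
        ne_top_of_le_ne_top ENNReal.one_ne_top (hDen_le_one n)
      have hsum1 : (∫⁻ θ in {θ : Θ | dist θ θ₀ < ε},
          ENNReal.ofReal (Λ n θ) ∂prior) / Den n + rn n = 1 := by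
        rw [hrn, ENNReal.div_add_div_same, hsplit, ENNReal.div_self hDenne hDentop]
      have hrn_ne_top : rn n ≠ ⊤ := by
        have h1 : rn n ≤ 1 := by
          rw [← hsum1]; exact le_add_self
        exact ne_top_of_le_ne_top ENNReal.one_ne_top h1
      exact ENNReal.eq_sub_of_add_eq hrn_ne_top hsum1
    have hcsub : Continuous (fun x : ℝ≥0∞ => 1 - x) :=
      ENNReal.continuous_sub_left ENNReal.one_ne_top
    have hlim : Tendsto (fun n => 1 - rn n) atTop (𝓝 1) := by
      have := (hcsub.tendsto 0).comp hr0
      simpa [Function.comp_def] using this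
    exact Tendsto.congr' (hev_eq.mono fun n h => h.symm) hlim

end Det

/-- **Posterior consistency for i.i.d. sampling from a finite observation space with a
continuous, identifiable likelihood.** Let `Θ` be a compact metric space, `X` a nonempty
finite type, and `L : Θ → X → ℝ` nonnegative with `∑_x L θ x = 1`, continuous in `θ` for each
`x`, and injective in `θ`. Let `μ₀` be the probability measure on `X` with `μ₀ {x} = L θ₀ x`,
let `Π` be a Borel prior on `Θ` with full topological support, and let `P` be the law of an
i.i.d. sequence from `μ₀` (characterized by its values on measurable cylinder sets). Then for
`P`-almost every data sequence `ω` and every `ε > 0`, the posterior mass of the `ε`-ball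
around `θ₀` is well-defined for all sufficiently large `n` and converges to `1`. -/
theorem posterior_consistency_finite_obs
    {Θ : Type*} [MetricSpace Θ] [CompactSpace Θ] [MeasurableSpace Θ] [BorelSpace Θ]
    {X : Type*} [Fintype X] [Nonempty X] [MeasurableSpace X] [MeasurableSingletonClass X]
    (L : Θ → X → ℝ)
    (hL_nonneg : ∀ θ x, 0 ≤ L θ x)
    (hL_sum : ∀ θ, ∑ x, L θ x = 1)
    (hL_cont : ∀ x, Continuous fun θ => L θ x)
    (hL_inj : Function.Injective L)
    (θ₀ : Θ)
    (μ₀ : Measure X) [IsProbabilityMeasure μ₀]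
    (hμ₀ : ∀ x, μ₀ {x} = ENNReal.ofReal (L θ₀ x))
    (prior : Measure Θ) [IsProbabilityMeasure prior]
    (hprior_supp : ∀ U : Set Θ, IsOpen U → U.Nonempty → 0 < prior U)
    (P : Measure (ℕ → X)) [IsProbabilityMeasure P]
    (hP : ∀ (n : ℕ) (s : Fin n → Set X), (∀ i, MeasurableSet (s i)) →
      P {ω | ∀ i : Fin n, ω (i : ℕ) ∈ s i} = ∏ i, μ₀ (s i)) :
    ∀ᵐ ω ∂P, ∀ ε > (0 : ℝ),
      (∀ᶠ n in atTop,
        0 < ∫⁻ θ, ∏ i : Fin n, ENNReal.ofReal (L θ (ω (i : ℕ))) ∂prior ∧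
          ∫⁻ θ, ∏ i : Fin n, ENNReal.ofReal (L θ (ω (i : ℕ))) ∂prior < ⊤) ∧
      Tendsto
        (fun n : ℕ =>
          (∫⁻ θ in {θ : Θ | dist θ θ₀ < ε},
              ∏ i : Fin n, ENNReal.ofReal (L θ (ω (i : ℕ))) ∂prior) /
            ∫⁻ θ, ∏ i : Fin n, ENNReal.ofReal (L θ (ω (i : ℕ))) ∂prior)
        atTop (𝓝 1) := by
  classical
  have hALLmeas : ∀ A : Set X, MeasurableSet A := fun A => A.toFinite.measurableSet
  -- law of a single coordinate
  have hcoord : ∀ (i : ℕ) (A : Set X), P {ω | ω i ∈ A} = μ₀ A := by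
    intro i A
    have h := hP (i+1) (fun k => if (k : ℕ) = i then A else Set.univ)
      (fun k => hALLmeas _)
    have hset : {ω : ℕ → X | ∀ k : Fin (i+1),
        ω (k : ℕ) ∈ (if (k : ℕ) = i then A else Set.univ)} = {ω | ω i ∈ A} := by
      ext ω
      simp only [Set.mem_setOf_eq]
      constructor
      · intro h'
        have := h' ⟨i, Nat.lt_succ_self i⟩
        simpa using this
      · intro h' k
        by_cases hk : (k : ℕ) = i
        · rw [if_pos hk, hk]; exact h'
        · rw [if_neg hk]; trivial
    have hprodA : (∏ k : Fin (i+1),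
        μ₀ (if (k : ℕ) = i then A else Set.univ)) = μ₀ A := by
      rw [Finset.prod_eq_single (⟨i, Nat.lt_succ_self i⟩ : Fin (i+1))]
      · simp
      · intro k _ hk
        have hne : (k : ℕ) ≠ i := fun h' => hk (Fin.ext h')
        simp [hne]
      · intro h'
        exact absurd (Finset.mem_univ _) h'
    rw [hset] at h
    rw [h, hprodA]
  -- pairwise law
  have hpair : ∀ (i j : ℕ), i ≠ j → ∀ A B : Set X,
      P ({ω | ω i ∈ A} ∩ {ω | ω j ∈ B}) = μ₀ A * μ₀ B := by
    intro i j hij A B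
    have hi : i < max i j + 1 := Nat.lt_succ_of_le (le_max_left i j)
    have hj : j < max i j + 1 := Nat.lt_succ_of_le (le_max_right i j)
    set n := max i j + 1 with hn
    set s : Fin n → Set X := fun k =>
      if (k : ℕ) = i then A else if (k : ℕ) = j then B else Set.univ with hs
    have h := hP n s (fun k => hALLmeas _)
    have hset : {ω : ℕ → X | ∀ k : Fin n, ω (k : ℕ) ∈ s k}
        = {ω | ω i ∈ A} ∩ {ω | ω j ∈ B} := by
      ext ω
      simp only [Set.mem_setOf_eq, Set.mem_inter_iff]
      constructor
      · intro h'
        constructor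
        · have := h' ⟨i, hi⟩
          simpa [hs] using this
        · have := h' ⟨j, hj⟩
          simpa [hs, Ne.symm hij] using this
      · rintro ⟨h1, h2⟩ k
        by_cases hk1 : (k : ℕ) = i
        · simp only [hs]
          rw [if_pos hk1, hk1]
          exact h1
        · by_cases hk2 : (k : ℕ) = j
          · simp only [hs]
            rw [if_neg hk1, if_pos hk2, hk2]
            exact h2
          · simp only [hs]
            rw [if_neg hk1, if_neg hk2]
            trivial
    have hij' : (⟨i, hi⟩ : Fin n) ≠ ⟨j, hj⟩ := by
      intro h'
      exact hij (by simpa using congrArg Fin.val h')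
    have hprodAB : (∏ k, μ₀ (s k)) = μ₀ A * μ₀ B := by
      rw [← Finset.prod_subset (Finset.subset_univ {(⟨i, hi⟩ : Fin n), ⟨j, hj⟩})
        (fun k _ hk => ?_)]
      · rw [Finset.prod_pair hij']
        have e1 : s ⟨i, hi⟩ = A := by simp [hs]
        have e2 : s ⟨j, hj⟩ = B := by
          simp [hs, Ne.symm hij]
        rw [e1, e2]
      · simp only [Finset.mem_insert, Finset.mem_singleton] at hk
        push_neg at hk
        obtain ⟨hk1, hk2⟩ := hk
        have h1 : (k : ℕ) ≠ i := fun h' => hk1 (Fin.ext h')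
        have h2 : (k : ℕ) ≠ j := fun h' => hk2 (Fin.ext h')
        simp [hs, h1, h2]
    rw [hset] at h
    rw [h, hprodAB]
  -- coordinate maps have law μ₀
  have hmap : ∀ i : ℕ, Measure.map (fun ω : ℕ → X => ω i) P = μ₀ := by
    intro i
    ext A hA
    rw [Measure.map_apply (measurable_pi_apply i) hA]
    exact hcoord i A
  -- strong law for each observation value
  have hSLLN : ∀ x : X, ∀ᵐ ω ∂P, Tendsto (fun n : ℕ =>
      ((((Finset.range n).filter fun i => ω i = x).card : ℝ)) / n)
      atTop (𝓝 (L θ₀ x)) := by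
    intro x
    set φ : X → ℝ := fun y => if y = x then 1 else 0 with hφ
    have hφmeas : Measurable φ := measurable_of_finite φ
    set Y : ℕ → (ℕ → X) → ℝ := fun i ω => φ (ω i) with hYdef
    have hYmeas : ∀ i, Measurable (Y i) :=
      fun i => hφmeas.comp (measurable_pi_apply i)
    have hint : Integrable (Y 0) P := by
      refine (integrable_const (1 : ℝ)).mono'
        ((hYmeas 0).aestronglyMeasurable) ?_
      refine Eventually.of_forall fun ω => ?_
      simp only [hYdef, hφ]
      by_cases h : ω 0 = x <;> simp [h]
    have hindep : Pairwise (Function.onFun (IndepFun · · P) Y) := by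
      intro i j hij
      have hc : IndepFun (fun ω : ℕ → X => ω i) (fun ω : ℕ → X => ω j) P := by
        rw [indepFun_iff_measure_inter_preimage_eq_mul]
        intro A B _ _
        calc P ((fun ω : ℕ → X => ω i) ⁻¹' A ∩ (fun ω : ℕ → X => ω j) ⁻¹' B)
            = μ₀ A * μ₀ B := hpair i j hij A B
          _ = P ((fun ω : ℕ → X => ω i) ⁻¹' A) *
              P ((fun ω : ℕ → X => ω j) ⁻¹' B) := by
              rw [← hcoord i A, ← hcoord j B]
              rfl
      exact hc.comp hφmeas hφmeas
    have hident : ∀ i, IdentDistrib (Y i) (Y 0) P P := by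
      intro i
      have hcoordId : IdentDistrib (fun ω : ℕ → X => ω i)
          (fun ω : ℕ → X => ω 0) P P :=
        ⟨(measurable_pi_apply i).aemeasurable,
          (measurable_pi_apply 0).aemeasurable, by rw [hmap i, hmap 0]⟩
      exact hcoordId.comp hφmeas
    have hexp : P[Y 0] = L θ₀ x := by
      have h1 : Y 0 = Set.indicator {ω : ℕ → X | ω 0 = x} (fun _ => (1:ℝ)) := by
        funext ω
        rw [Set.indicator_apply]
        simp only [hYdef, hφ, Set.mem_setOf_eq]
      have hms : MeasurableSet {ω : ℕ → X | ω 0 = x} := by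
        have hpre : {ω : ℕ → X | ω 0 = x} = (fun ω : ℕ → X => ω 0) ⁻¹' {x} := rfl
        rw [hpre]
        exact (measurable_pi_apply 0) (measurableSet_singleton x)
      rw [h1, integral_indicator_const (1:ℝ) hms]
      have h2 : P {ω : ℕ → X | ω 0 = x} = μ₀ {x} := hcoord 0 {x}
      rw [measureReal_def, h2, hμ₀ x, smul_eq_mul, mul_one,
        ENNReal.toReal_ofReal (hL_nonneg θ₀ x)]
    have h := strong_law_ae Y hint hindep hident
    rw [hexp] at h
    filter_upwards [h] with ω hω
    have heq : ∀ n : ℕ, (n : ℝ)⁻¹ • (∑ i ∈ Finset.range n, Y i ω)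
        = ((((Finset.range n).filter fun i => ω i = x).card : ℝ)) / n := by
      intro n
      have : ∑ i ∈ Finset.range n, Y i ω
          = (((Finset.range n).filter fun i => ω i = x).card : ℝ) := by
        simp only [hYdef, hφ]
        exact Finset.sum_boole _ _
      rw [smul_eq_mul, this, inv_mul_eq_div]
    exact Tendsto.congr heq hω
  -- a.s. the observations have positive likelihood under θ₀
  have hae1 : ∀ᵐ ω ∂P, ∀ i : ℕ, 0 < L θ₀ (ω i) := by
    rw [ae_all_iff]
    intro i
    rw [ae_iff]
    have hset : {ω : ℕ → X | ¬ 0 < L θ₀ (ω i)}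
        = {ω | ω i ∈ {x : X | ¬ 0 < L θ₀ x}} := rfl
    rw [hset, hcoord i _]
    have hrw : {x : X | ¬ 0 < L θ₀ x} = ⋃ x ∈ {x : X | ¬ 0 < L θ₀ x}, {x} :=
      (Set.biUnion_of_singleton _).symm
    rw [hrw, measure_biUnion_null_iff (Set.to_countable _)]
    intro x hx
    rw [hμ₀ x, ENNReal.ofReal_eq_zero]
    exact not_lt.mp hx
  have hae2 : ∀ᵐ ω ∂P, ∀ x : X, Tendsto (fun n : ℕ =>
      ((((Finset.range n).filter fun i => ω i = x).card : ℝ)) / n)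
      atTop (𝓝 (L θ₀ x)) := ae_all_iff.mpr hSLLN
  filter_upwards [hae1, hae2] with ω h1 h2
  intro ε hε
  exact det_consistency L hL_nonneg hL_sum hL_cont hL_inj θ₀ prior
    hprior_supp ω h1 h2 hε
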